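/- Let P = (N, ≼) be a finite poset, X ⊆ N a lower set, and consider the bipartite graph G₀ on U = {uᵢ : i ∈ N}, V = {vⱼ : j ∈ N} with edges {uᵢ, vⱼ} whenever j ≼ i. Then the unique matching M with ∂M ∩ U = {uᵢ : i ∈ X} is the trivial matching {{uᵢ, vᵢ} : i ∈ X}. -/
import Mathlib


theorem stmt8 {α : Type*} [Fintype α] [PartialOrder α] [DecidableEq α]
    (X : Finset α) (hX : IsLowerSet (X : Set α))
    (M : Finset (α × α))
    (hedges : ∀ e ∈ M, e.2 ≤ e.1)
    (hfst : ∀ e ∈ M, ∀ e' ∈ M, e.1 = e'.1 → e = e')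
    (hsnd : ∀ e ∈ M, ∀ e' ∈ M, e.2 = e'.2 → e = e')
    (hcov : M.image Prod.fst = X) :
    M = X.image (fun i => (i, i)) := by
  have key : ∀ i : α, ∀ e ∈ M, e.1 = i → e.2 = e.1 := by
    intro i
    induction i using WellFoundedLT.induction with
    | _ i IH =>
      intro e he h1
      subst h1
      rcases eq_or_lt_of_le (hedges e he) with h | h
      · exact h
      · exfalso
        have h1X : e.1 ∈ X := by
          rw [← hcov]; exact Finset.mem_image_of_mem _ he
        have h2X : e.2 ∈ X := hX h.le h1X
        rw [← hcov, Finset.mem_image] at h2X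
        obtain ⟨e', he', hfe'⟩ := h2X
        have h2 : e'.2 = e'.1 := IH e.2 h e' he' hfe'
        have : e = e' := hsnd e he e' he' (by rw [h2, hfe'])
        exact h.ne' (by rw [this]; exact h2.symm)
  ext ⟨a, b⟩
  simp only [Finset.mem_image]
  constructor
  · intro he
    have hb := key a (a, b) he rfl
    refine ⟨a, by rw [← hcov]; exact Finset.mem_image_of_mem _ he, ?_⟩
    simp_all
  · rintro ⟨i, hi, hiab⟩
    injection hiab with h1 h2
    subst h1; subst h2
    rw [← hcov, Finset.mem_image] at hi
    obtain ⟨e', he', hfe'⟩ := hi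
    have h2 := key e'.1 e' he' rfl
    have he : e' = (i, i) := Prod.ext hfe' (h2.trans hfe')
    rwa [he] at he'
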